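/- Let Lx > 0, c > 0, and set a* = (Lx/2)·√(4c/Lx² + 1)/√3. Define F(x, a) = 1/((x−a)² + c) + 1/((x+a)² + c). Then F(0, a*) = F(Lx/2, a*), i.e., with antennas at ±a*, the received power at the centre x = 0 equals the received power at the boundary x = Lx/2. -/

import Mathlib

/-- With antennas at ±a*, a* = (Lx/2)√(4c/Lx²+1)/√3, the received power at the
centre x = 0 equals the received power at the boundary x = Lx/2. -/
theorem stmt_7 (Lx c : ℝ) (hLx : 0 < Lx) (hc : 0 < c)
    (astar : ℝ) (hastar : astar = (Lx / 2) * Real.sqrt (4 * c / Lx ^ 2 + 1) / Real.sqrt 3)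
    (F : ℝ → ℝ → ℝ)
    (hF : ∀ x a, F x a = 1 / ((x - a) ^ 2 + c) + 1 / ((x + a) ^ 2 + c)) :
    F 0 astar = F (Lx / 2) astar := by
  have hsq : astar ^ 2 = (c + Lx ^ 2 / 4) / 3 := by
    have h1 : Real.sqrt (4 * c / Lx ^ 2 + 1) ^ 2 = 4 * c / Lx ^ 2 + 1 :=
      Real.sq_sqrt (by positivity)
    have h3 : Real.sqrt 3 ^ 2 = 3 := Real.sq_sqrt (by norm_num)
    have hLx2 : Lx ^ 2 ≠ 0 := by positivity
    have hLx2' : Lx ^ 2 ≠ 0 := hLx2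
    rw [hastar, div_pow, mul_pow, div_pow, h1, h3]
    field_simp
    ring
  rw [hF, hF]
  have hp1 : (0 - astar) ^ 2 + c > 0 := by positivity
  have hp2 : (0 + astar) ^ 2 + c > 0 := by positivity
  have hp3 : (Lx / 2 - astar) ^ 2 + c > 0 := by positivity
  have hp4 : (Lx / 2 + astar) ^ 2 + c > 0 := by positivity
  field_simp
  linear_combination (-12 * (2 * (astar^2 + c) * (Lx^2 - 12*astar^2 + 4*c) + 32 * astar^2 * (astar^2 + c) - 8 * (astar^2 + c)^2)) * hsq
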